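/- arXiv:2504.11048 — 2 statements merged into one kernel-verified Lean document; each statement's English description precedes it below -/
import Mathlib

section
/- Let F be a free group with free basis Y where |Y| > 1, and let y1, y2 be nontrivial elements of F. Then there exists v in F such that for every nonzero integer m, the commutator [v^m y1 v^{-m}, y2] is nontrivial. -/
open scoped commutatorElement


private abbrev CC : Type := Multiplicative ℤ × Multiplicative ℤ

private lemma cc_gen :
    Subgroup.closure ({(Multiplicative.ofAdd 1, 1), (1, Multiplicative.ofAdd 1)} : Set CC) = ⊤ := by
  rw [eq_top_iff]
  rintro ⟨x, y⟩ -
  have hxy : ((x, y) : CC) =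
      ((Multiplicative.ofAdd 1, (1 : Multiplicative ℤ)) : CC) ^ (Multiplicative.toAdd x) *
      (((1 : Multiplicative ℤ), Multiplicative.ofAdd 1) : CC) ^ (Multiplicative.toAdd y) := by
    ext
    · show x = ((Multiplicative.ofAdd 1 : Multiplicative ℤ) ^ (Multiplicative.toAdd x) *
        (1 : Multiplicative ℤ) ^ (Multiplicative.toAdd y))
      simp [← Multiplicative.toAdd.injective.eq_iff]
    · show y = ((1 : Multiplicative ℤ) ^ (Multiplicative.toAdd x) *
        (Multiplicative.ofAdd 1 : Multiplicative ℤ) ^ (Multiplicative.toAdd y))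
      simp [← Multiplicative.toAdd.injective.eq_iff]
  rw [hxy]
  exact mul_mem (zpow_mem (Subgroup.subset_closure (by simp)) _) (zpow_mem (Subgroup.subset_closure (by simp)) _)

private lemma cc_core {P Q : CC} (hgen : Subgroup.closure ({P, Q} : Set CC) = ⊤) {m n : ℤ}
    (hm : m ≠ 0) (hrel : P ^ m * Q ^ n = 1) : False := by
  have key : ∀ x : CC, x ^ m ∈ Subgroup.zpowers Q := by
    intro x
    have hx : x ∈ Subgroup.closure ({P, Q} : Set CC) := hgen ▸ Subgroup.mem_top x
    induction hx using Subgroup.closure_induction with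
    | mem g hg =>
      rcases hg with h | h
      · rw [h]
        have hP : P ^ m = (Q ^ n)⁻¹ := eq_inv_of_mul_eq_one_left (by rw [← hrel, mul_comm])
        rw [hP]
        exact inv_mem (Subgroup.zpow_mem_zpowers Q n)
      · rw [h]
        exact Subgroup.zpow_mem_zpowers Q m
    | one => simpa using (Subgroup.zpowers Q).one_mem
    | mul a b ha hb iha ihb => rw [mul_zpow]; exact mul_mem iha ihb
    | inv a ha iha => rw [inv_zpow]; exact inv_mem iha
  obtain ⟨k, hk⟩ := Subgroup.mem_zpowers_iff.mp (key (Multiplicative.ofAdd 1, 1))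
  obtain ⟨l, hl⟩ := Subgroup.mem_zpowers_iff.mp (key (1, Multiplicative.ofAdd 1))
  have fst_zpow : ∀ (t : CC) (j : ℤ), (t ^ j).1 = t.1 ^ j := fun t j => rfl
  have snd_zpow : ∀ (t : CC) (j : ℤ), (t ^ j).2 = t.2 ^ j := fun t j => rfl
  have e1 : k * Multiplicative.toAdd Q.1 = m := by
    have := congrArg (fun t : CC => Multiplicative.toAdd t.1) hk
    simpa [fst_zpow, toAdd_zpow, smul_eq_mul] using this
  have e2 : k * Multiplicative.toAdd Q.2 = 0 := by
    have := congrArg (fun t : CC => Multiplicative.toAdd t.2) hk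
    simpa [snd_zpow, toAdd_zpow, smul_eq_mul] using this
  have e4 : l * Multiplicative.toAdd Q.2 = m := by
    have := congrArg (fun t : CC => Multiplicative.toAdd t.2) hl
    simpa [snd_zpow, toAdd_zpow, smul_eq_mul] using this
  rcases mul_eq_zero.mp e2 with hk0 | hb0
  · rw [hk0, zero_mul] at e1
    exact hm e1.symm
  · rw [hb0, mul_zero] at e4
    exact hm e4.symm

private lemma cc_core' {P Q : CC} (hgen : Subgroup.closure ({P, Q} : Set CC) = ⊤) {m n : ℤ}
    (hmn : m ≠ 0 ∨ n ≠ 0) (hrel : P ^ m * Q ^ n = 1) : False := by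
  rcases hmn with hm | hn
  · exact cc_core hgen hm hrel
  · exact cc_core (by rwa [Set.pair_comm]) hn (by rwa [mul_comm])

private lemma of_not_commute {β : Type*} {a b : β} (hab : a ≠ b) :
    ¬ Commute (FreeGroup.of a) (FreeGroup.of b) := by
  have hncl : ¬ Commute (Equiv.swap 0 1 : Equiv.Perm (Fin 3)) (Equiv.swap 1 2) := by
    simp only [Commute, SemiconjBy]
    intro hcon
    have := congrFun (congrArg (fun e : Equiv.Perm (Fin 3) => (e : Fin 3 → Fin 3)) hcon) 0
    simp [Equiv.swap_apply_def] at this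
  classical
  intro h
  have hmap := h.map (FreeGroup.lift (fun x : β =>
    if x = a then (Equiv.swap 0 1 : Equiv.Perm (Fin 3)) else Equiv.swap 1 2))
  rw [FreeGroup.lift_apply_of, FreeGroup.lift_apply_of, if_pos rfl, if_neg (Ne.symm hab)] at hmap
  exact absurd hmap hncl

private lemma freeGroup_eq_one_of_isEmpty {γ : Type*} [IsEmpty γ] (x : FreeGroup γ) : x = 1 := by
  induction x using FreeGroup.induction_on with
  | C1 => rfl
  | of g => exact isEmptyElim g
  | inv_of g _ => exact isEmptyElim g
  | mul p q hp hq => rw [hp, hq, one_mul]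

private lemma mem_zpowers_of_subsingleton {γ : Type*} [Subsingleton γ] (g : γ)
    (x : FreeGroup γ) : x ∈ Subgroup.zpowers (FreeGroup.of g) := by
  induction x using FreeGroup.induction_on with
  | C1 => exact one_mem _
  | of y =>
    have : (y : γ) = g := Subsingleton.elim y g
    rw [this]
    exact Subgroup.mem_zpowers _
  | inv_of y hy => exact inv_mem hy
  | mul p q hp hq => exact mul_mem hp hq

private lemma freeGroup_comm_of_subsingleton {γ : Type*} [Subsingleton γ]
    (x y : FreeGroup γ) : Commute x y := by
  rcases isEmpty_or_nonempty γ with he | ⟨⟨g⟩⟩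
  · rw [freeGroup_eq_one_of_isEmpty x]
    exact Commute.one_left y
  · obtain ⟨i, hi⟩ := Subgroup.mem_zpowers_iff.mp (mem_zpowers_of_subsingleton g x)
    obtain ⟨j, hj⟩ := Subgroup.mem_zpowers_iff.mp (mem_zpowers_of_subsingleton g y)
    rw [← hi, ← hj]
    exact (Commute.refl _).zpow_zpow i j

private lemma comm_of_gens_subsingleton (G : Type*) [Group G] [IsFreeGroup G]
    (hs : Subsingleton (IsFreeGroup.Generators G)) (x y : G) : Commute x y := by
  have h := freeGroup_comm_of_subsingleton (γ := IsFreeGroup.Generators G)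
    ((IsFreeGroup.toFreeGroup G) x) ((IsFreeGroup.toFreeGroup G) y)
  have h2 := h.map (IsFreeGroup.toFreeGroup G).symm.toMonoidHom
  simpa using h2

private lemma gens_subsingleton (G : Type*) [Group G] [IsFreeGroup G]
    (hc : ∀ x y : G, Commute x y) : Subsingleton (IsFreeGroup.Generators G) := by
  by_contra h
  rw [not_subsingleton_iff_nontrivial] at h
  obtain ⟨a, b, hab⟩ := exists_pair_ne (IsFreeGroup.Generators G)
  apply of_not_commute hab
  have h3 := (hc ((IsFreeGroup.toFreeGroup G).symm (FreeGroup.of a))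
    ((IsFreeGroup.toFreeGroup G).symm (FreeGroup.of b))).map
    (IsFreeGroup.toFreeGroup G).toMonoidHom
  simpa using h3

private lemma cyclic_of_comm (G : Type*) [Group G] [IsFreeGroup G]
    (hc : ∀ x y : G, Commute x y) :
    (∃ g : G, ∀ x : G, ∃ i : ℤ, g ^ i = x) ∧
      ∀ (x : G) (k : ℤ), k ≠ 0 → x ^ k = 1 → x = 1 := by
  have hs := gens_subsingleton G hc
  set e := IsFreeGroup.toFreeGroup G with he
  rcases isEmpty_or_nonempty (IsFreeGroup.Generators G) with hem | ⟨⟨g0⟩⟩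
  · have hone : ∀ x : G, x = 1 := fun x => by
      have h1 : e x = 1 := freeGroup_eq_one_of_isEmpty (e x)
      have := congrArg e.symm h1
      simpa using this
    exact ⟨⟨1, fun x => ⟨0, by rw [zpow_zero, hone x]⟩⟩, fun x k _ _ => hone x⟩
  · constructor
    · refine ⟨e.symm (FreeGroup.of g0), fun x => ?_⟩
      obtain ⟨i, hi⟩ := Subgroup.mem_zpowers_iff.mp (mem_zpowers_of_subsingleton g0 (e x))
      refine ⟨i, ?_⟩
      have := congrArg e.symm hi
      rw [map_zpow] at this
      simpa using this
    · intro x k hk hxk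
      obtain ⟨i, hi⟩ := Subgroup.mem_zpowers_iff.mp (mem_zpowers_of_subsingleton g0 (e x))
      have hpow : (FreeGroup.of g0 : FreeGroup (IsFreeGroup.Generators G)) ^ (i * k) = 1 := by
        rw [zpow_mul, hi, ← map_zpow, hxk, map_one]
      have hik : i * k = 0 := by
        have hσ := congrArg
          (FreeGroup.lift (fun _ : IsFreeGroup.Generators G => Multiplicative.ofAdd (1 : ℤ)))
          hpow
        simp only [map_zpow, map_one, FreeGroup.lift_apply_of] at hσ
        have := congrArg Multiplicative.toAdd hσ
        simpa [toAdd_zpow] using this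
      have hi0 : i = 0 := by
        rcases mul_eq_zero.mp hik with h' | h'
        · exact h'
        · exact absurd h' hk
      rw [hi0, zpow_zero] at hi
      have := congrArg e.symm hi
      simpa using this.symm

private lemma engine (G : Type*) [Group G] [IsFreeGroup G] {u w : G}
    (hgen : Subgroup.closure ({u, w} : Set G) = ⊤) {m n : ℤ} (hmn : m ≠ 0 ∨ n ≠ 0)
    (hrel : ∀ f : G →* CC, f u ^ m * f w ^ n = 1) (x y : G) : Commute x y := by
  classical
  rcases subsingleton_or_nontrivial (IsFreeGroup.Generators G) with hs | hn
  · exact comm_of_gens_subsingleton G hs x y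
  · exfalso
    obtain ⟨a, b, hab⟩ := exists_pair_ne (IsFreeGroup.Generators G)
    set X1 : CC := (Multiplicative.ofAdd 1, 1) with hX1
    set X2 : CC := (1, Multiplicative.ofAdd 1) with hX2
    set φ : FreeGroup (IsFreeGroup.Generators G) →* CC :=
      FreeGroup.lift (fun g => if g = a then X1 else if g = b then X2 else 1) with hφ
    set F : G →* CC := φ.comp (IsFreeGroup.toFreeGroup G).toMonoidHom with hF
    have hFsurj : Function.Surjective F := by
      have hr : Subgroup.closure ({X1, X2} : Set CC) ≤ F.range := by
        rw [Subgroup.closure_le]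
        rintro p (rfl | rfl)
        · exact ⟨(IsFreeGroup.toFreeGroup G).symm (FreeGroup.of a), by
            simp [hF, hφ]⟩
        · exact ⟨(IsFreeGroup.toFreeGroup G).symm (FreeGroup.of b), by
            simp [hF, hφ, if_neg (Ne.symm hab)]⟩
      rw [cc_gen] at hr
      rw [← MonoidHom.range_eq_top]
      exact top_le_iff.mp hr
    have htop : Subgroup.closure ({F u, F w} : Set CC) = ⊤ := by
      have hmap := MonoidHom.map_closure F ({u, w} : Set G)
      rw [hgen, Subgroup.map_top_of_surjective F hFsurj, Set.image_pair] at hmap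
      exact hmap.symm
    exact cc_core' htop hmn (hrel F)

private lemma subgroup_pair_gen {G : Type*} [Group G] {u w : G}
    (hu : u ∈ Subgroup.closure ({u, w} : Set G)) (hw : w ∈ Subgroup.closure ({u, w} : Set G)) :
    Subgroup.closure ({(⟨u, hu⟩ : Subgroup.closure ({u, w} : Set G)), ⟨w, hw⟩} :
      Set (Subgroup.closure ({u, w} : Set G))) = ⊤ := by
  have h := Subgroup.closure_preimage_eq_top ({u, w} : Set G)
  have hset : ((Subgroup.closure ({u, w} : Set G)).subtype ⁻¹' ({u, w} : Set G)) =
      ({⟨u, hu⟩, ⟨w, hw⟩} : Set (Subgroup.closure ({u, w} : Set G))) := by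
    ext ⟨g, hg⟩
    simp [Subgroup.coe_subtype, Subtype.ext_iff]
  rwa [hset] at h

private lemma kl {Y : Type} {u w : FreeGroup Y} {m n : ℤ} (hmn : m ≠ 0 ∨ n ≠ 0)
    (hrel : u ^ m * w ^ n = 1) : Commute u w := by
  set K := Subgroup.closure ({u, w} : Set (FreeGroup Y)) with hK
  have hu : u ∈ K := Subgroup.subset_closure (by simp)
  have hw : w ∈ K := Subgroup.subset_closure (by simp)
  set U : K := ⟨u, hu⟩ with hU
  set W : K := ⟨w, hw⟩ with hW
  have hUW : U ^ m * W ^ n = 1 := by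
    apply Subtype.ext
    push_cast
    exact hrel
  have hrel' : ∀ f : K →* CC, f U ^ m * f W ^ n = 1 := fun f => by
    rw [← map_zpow, ← map_zpow, ← map_mul, hUW, map_one]
  have := engine K (subgroup_pair_gen hu hw) hmn hrel' U W
  have h2 := congrArg (Subtype.val) this
  exact h2

private lemma kl2 {Y : Type} {u c : FreeGroup Y} {q p : ℤ} (hqp : q ≠ p)
    (hrel : c * u ^ q * c⁻¹ = u ^ p) : Commute u c := by
  set K := Subgroup.closure ({u, c} : Set (FreeGroup Y)) with hK
  have hu : u ∈ K := Subgroup.subset_closure (by simp)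
  have hc : c ∈ K := Subgroup.subset_closure (by simp)
  set U : K := ⟨u, hu⟩ with hU
  set C : K := ⟨c, hc⟩ with hC
  have hUC : C * U ^ q * C⁻¹ = U ^ p := by
    apply Subtype.ext
    push_cast
    exact hrel
  have hrel' : ∀ f : K →* CC, f U ^ (q - p) * f C ^ (0 : ℤ) = 1 := fun f => by
    have h2 := congrArg f hUC
    simp only [map_mul, map_zpow, map_inv] at h2
    have h3 : f U ^ q = f U ^ p := by
      have : f C * f U ^ q * (f C)⁻¹ = f U ^ q := by
        rw [mul_comm (f C) (f U ^ q), mul_assoc, mul_inv_cancel, mul_one]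
      rw [← this, h2]
    rw [zpow_zero, mul_one, zpow_sub, h3, mul_inv_cancel]
  have := engine K (subgroup_pair_gen hu hc) (Or.inl (sub_ne_zero.mpr hqp)) hrel' U C
  have h2 := congrArg (Subtype.val) this
  exact h2

private lemma closure_pair_comm {G : Type*} [Group G] {x y : G} (h : Commute x y) :
    ∀ a ∈ Subgroup.closure ({x, y} : Set G), ∀ b ∈ Subgroup.closure ({x, y} : Set G),
      Commute a b := by
  have h1 : ∀ a ∈ Subgroup.closure ({x, y} : Set G), Commute x a ∧ Commute y a := by
    intro a ha
    induction ha using Subgroup.closure_induction with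
    | mem g hg =>
      rcases hg with rfl | rfl
      · exact ⟨Commute.refl g, h.symm⟩
      · exact ⟨h, Commute.refl g⟩
    | one => exact ⟨Commute.one_right x, Commute.one_right y⟩
    | mul p q hp hq ihp ihq => exact ⟨ihp.1.mul_right ihq.1, ihp.2.mul_right ihq.2⟩
    | inv p hp ihp => exact ⟨ihp.1.inv_right, ihp.2.inv_right⟩
  intro a ha
  induction ha using Subgroup.closure_induction with
  | mem g hg =>
    intro b hb
    rcases hg with rfl | rfl
    · exact (h1 b hb).1
    · exact (h1 b hb).2
  | one => exact fun b hb => Commute.one_left b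
  | mul p q hp hq ihp ihq => exact fun b hb => (ihp b hb).mul_left (ihq b hb)
  | inv p hp ihp => exact fun b hb => (ihp b hb).inv_left

private lemma common_power {Y : Type} {x y : FreeGroup Y} (h : Commute x y) :
    ∃ (z : FreeGroup Y) (p q : ℤ), z ^ p = x ∧ z ^ q = y := by
  set K := Subgroup.closure ({x, y} : Set (FreeGroup Y)) with hK
  have hx : x ∈ K := Subgroup.subset_closure (by simp)
  have hy : y ∈ K := Subgroup.subset_closure (by simp)
  have hcomm : ∀ a b : K, Commute a b := by
    rintro ⟨a, ha⟩ ⟨b, hb⟩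
    have := closure_pair_comm h a ha b hb
    apply Subtype.ext
    push_cast
    exact this
  obtain ⟨⟨g, hgen⟩, -⟩ := cyclic_of_comm K hcomm
  obtain ⟨p, hp⟩ := hgen ⟨x, hx⟩
  obtain ⟨q, hq⟩ := hgen ⟨y, hy⟩
  refine ⟨(g : FreeGroup Y), p, q, ?_, ?_⟩
  · have := congrArg Subtype.val hp
    push_cast at this
    exact this
  · have := congrArg Subtype.val hq
    push_cast at this
    exact this

private lemma tf {Y : Type} {x : FreeGroup Y} {k : ℤ} (hk : k ≠ 0) (h : x ^ k = 1) :
    x = 1 := by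
  set K := Subgroup.zpowers x with hK
  have hcomm : ∀ a b : K, Commute a b := by
    rintro ⟨a, ha⟩ ⟨b, hb⟩
    obtain ⟨i, hi⟩ := Subgroup.mem_zpowers_iff.mp ha
    obtain ⟨j, hj⟩ := Subgroup.mem_zpowers_iff.mp hb
    apply Subtype.ext
    push_cast
    rw [← hi, ← hj]
    exact (Commute.refl x).zpow_zpow i j
  obtain ⟨-, htf⟩ := cyclic_of_comm K hcomm
  have h1 : (⟨x, Subgroup.mem_zpowers x⟩ : K) ^ k = 1 := by
    apply Subtype.ext
    push_cast
    exact h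
  have := htf _ k hk h1
  have h2 := congrArg Subtype.val this
  simpa using h2

private lemma comm_trans {Y : Type} {x y z : FreeGroup Y} (hy : y ≠ 1)
    (h1 : Commute x y) (h2 : Commute y z) : Commute x z := by
  obtain ⟨u, p, q, hup, huq⟩ := common_power h1
  obtain ⟨w, r, s, hwr, hws⟩ := common_power h2
  have hq : q ≠ 0 := by rintro rfl; rw [zpow_zero] at huq; exact hy huq.symm
  have hr : r ≠ 0 := by rintro rfl; rw [zpow_zero] at hwr; exact hy hwr.symm
  have huw : Commute u w := by
    apply kl (Or.inl hq) (n := -r)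
    rw [huq, zpow_neg, hwr, mul_inv_cancel]
  rw [← hup, ← hws]
  exact huw.zpow_zpow p s

private lemma conj_comm_lemma {Y : Type} {c z : FreeGroup Y} (hz : z ≠ 1)
    (h : Commute (c * z * c⁻¹) z) : Commute c z := by
  obtain ⟨u, p, q, hup, huq⟩ := common_power h
  have hczc : c * z * c⁻¹ ≠ 1 := by
    intro h1
    apply hz
    have : c * z = c := by
      have := congrArg (fun t => t * c) h1
      simpa [mul_assoc] using this
    have h3 := congrArg (fun t => c⁻¹ * t) this
    simpa [← mul_assoc] using h3
  have hp : p ≠ 0 := by rintro rfl; rw [zpow_zero] at hup; exact hczc hup.symm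
  have hq : q ≠ 0 := by rintro rfl; rw [zpow_zero] at huq; exact hz huq.symm
  by_cases hpq : q = p
  · have hcz : c * z * c⁻¹ = z := by rw [← hup, ← huq, hpq]
    have : c * z = z * c := by
      have := congrArg (fun t => t * c) hcz
      simpa [mul_assoc] using this
    exact this
  · have hcu : Commute u c := by
      apply kl2 hpq
      rw [huq, hup]
    have : Commute c (u ^ q) := (hcu.symm).zpow_right q
    rwa [huq] at this

/-- In a free group of rank > 1, for nontrivial y1, y2 there is v such that
`[v^m y1 v^{-m}, y2]` is nontrivial for every nonzero integer m. -/
theorem stmt0 (Y : Type) [Nontrivial Y] (y1 y2 : FreeGroup Y)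
    (h1 : y1 ≠ 1) (h2 : y2 ≠ 1) :
    ∃ v : FreeGroup Y, ∀ m : ℤ, m ≠ 0 → ⁅v ^ m * y1 * v ^ (-m), y2⁆ ≠ 1 := by
  by_cases hc : Commute y1 y2
  · obtain ⟨z, p, q, hzp, hzq⟩ := common_power hc
    have hz : z ≠ 1 := by rintro rfl; rw [one_zpow] at hzp; exact h1 hzp.symm
    have hv : ∃ v, ¬ Commute v z := by
      by_contra hvv
      push_neg at hvv
      obtain ⟨a, b, hab⟩ := exists_pair_ne Y
      exact of_not_commute hab
        (comm_trans hz (hvv (FreeGroup.of a)) (hvv (FreeGroup.of b)).symm)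
    obtain ⟨v, hv⟩ := hv
    have hvne : v ≠ 1 := by rintro rfl; exact hv (Commute.one_left z)
    refine ⟨v, fun m hm hcm => ?_⟩
    rw [commutatorElement_eq_one_iff_commute] at hcm
    apply hv
    -- notation
    have hvm1 : v ^ m ≠ 1 := fun hh => hvne (tf hm hh)
    have hAform : v ^ m * y1 * v ^ (-m) = v ^ m * y1 * (v ^ m)⁻¹ := by rw [zpow_neg]
    rw [hAform] at hcm
    -- hcm : Commute (v^m*y1*(v^m)⁻¹) y2
    have hAne : v ^ m * y1 * (v ^ m)⁻¹ ≠ 1 := by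
      intro hh
      apply h1
      have h3 : v ^ m * y1 = v ^ m := by
        have := congrArg (fun t => t * v ^ m) hh
        simpa [mul_assoc] using this
      have h4 := congrArg (fun t => (v ^ m)⁻¹ * t) h3
      simpa [← mul_assoc] using h4
    have hy2z : Commute y2 z := by
      rw [← hzq]; exact ((Commute.refl z).zpow_left q)
    have hy2ne := h2
    have hAz : Commute (v ^ m * y1 * (v ^ m)⁻¹) z := comm_trans h2 hcm hy2z
    have hconj : Commute (v ^ m * z * (v ^ m)⁻¹) (v ^ m * y1 * (v ^ m)⁻¹) := by
      have hzy1 : Commute z y1 := by rw [← hzp]; exact (Commute.refl z).zpow_right p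
      have hmapped := hzy1.map (MulAut.conj (v ^ m)).toMonoidHom
      simp only [MulEquiv.coe_toMonoidHom, MulAut.conj_apply] at hmapped
      exact hmapped
    have hvzv : Commute (v ^ m * z * (v ^ m)⁻¹) z := comm_trans hAne hconj hAz
    have hvmz : Commute (v ^ m) z := conj_comm_lemma hz hvzv
    exact comm_trans hvm1 ((Commute.refl v).zpow_right m) hvmz
  · refine ⟨1, fun m hm => ?_⟩
    rw [one_zpow, one_zpow, one_mul, mul_one, Ne, commutatorElement_eq_one_iff_commute]
    exact hc
end

section
/- Let F be a free group of rank greater than 1, and let v, w be nontrivial elements of F such that the cyclic subgroups ⟨v⟩ and ⟨w⟩ intersect trivially. Then for all nonzero integers m, k, n, we have v^m w^k v^{-m} ≠ w^n. -/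
open Subgroup

/-- Distinct free generators do not commute. -/
lemma aux_of_not_commute {β : Type*} [DecidableEq β] {a b : β} (hab : a ≠ b) :
    ¬ Commute (FreeGroup.of a) (FreeGroup.of b) := by
  intro h
  let s : Equiv.Perm (Fin 3) := Equiv.swap 0 1
  let t : Equiv.Perm (Fin 3) := Equiv.swap 1 2
  let f : β → Equiv.Perm (Fin 3) := fun x => if x = a then s else t
  have := congrArg (FreeGroup.lift f) h.eq
  simp only [map_mul, FreeGroup.lift_apply_of] at this
  have hfa : f a = s := if_pos rfl
  have hfb : f b = t := if_neg (fun hba => hab hba.symm)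
  rw [hfa, hfb] at this
  have : s * t ≠ t * s := by decide
  exact this ‹s * t = t * s›

/-- In a free group over a subsingleton type, every element is a power of a fixed element. -/
lemma aux_powers {β : Type*} [Subsingleton β] :
    ∃ g : FreeGroup β, (∀ x : FreeGroup β, ∃ n : ℤ, x = g ^ n) ∧
      (∀ x : FreeGroup β, ∀ t : ℤ, t ≠ 0 → x ^ t = 1 → x = 1) := by
  by_cases hne : Nonempty β
  · obtain ⟨c⟩ := hne
    have hpow : ∀ x : FreeGroup β, ∃ n : ℤ, x = FreeGroup.of c ^ n := by
      intro x
      induction x using FreeGroup.induction_on with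
      | C1 => exact ⟨0, by simp⟩
      | of b => exact ⟨1, by rw [Subsingleton.elim b c]; simp⟩
      | inv_of b ih =>
          obtain ⟨n, hn⟩ := ih
          exact ⟨-n, by rw [hn, ← zpow_neg]⟩
      | mul x y ihx ihy =>
          obtain ⟨n, hn⟩ := ihx
          obtain ⟨m, hm⟩ := ihy
          exact ⟨n + m, by rw [hn, hm, zpow_add]⟩
    refine ⟨FreeGroup.of c, hpow, ?_⟩
    intro x t ht hxt
    obtain ⟨n, rfl⟩ := hpow x
    let φ : FreeGroup β →* Multiplicative ℤ :=
      FreeGroup.lift (fun _ => Multiplicative.ofAdd (1 : ℤ))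
    have hφ : φ (FreeGroup.of c) = Multiplicative.ofAdd (1 : ℤ) := FreeGroup.lift_apply_of
    have h1 := congrArg φ hxt
    rw [← zpow_mul, map_zpow, hφ, map_one φ] at h1
    have hnt : n * t = 0 := by
      have h2 : Multiplicative.ofAdd ((n * t) • (1:ℤ)) = Multiplicative.ofAdd (0:ℤ) := by
        rw [ofAdd_zsmul]; simpa using h1
      have := Multiplicative.ofAdd.injective h2
      simpa using this
    have hn0 : n = 0 := by
      rcases mul_eq_zero.mp hnt with h | h
      · exact h
      · exact absurd h ht
    rw [hn0, zpow_zero]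
  · have hempty : IsEmpty β := not_nonempty_iff.mp hne
    have hone : ∀ x : FreeGroup β, x = 1 := by
      intro x
      induction x using FreeGroup.induction_on with
      | C1 => rfl
      | of b => exact (hempty.false b).elim
      | inv_of b ih => rw [ih]; simp
      | mul x y ihx ihy => rw [ihx, ihy, one_mul]
    exact ⟨1, fun x => ⟨0, by rw [hone x]; simp⟩, fun x _ _ _ => hone x⟩

/-- A commutative subgroup of a free group has subsingleton free generators. -/
lemma aux_subsingleton_gens {Y : Type} (H : Subgroup (FreeGroup Y))
    (hcomm : ∀ x ∈ H, ∀ y ∈ H, x * y = y * x) :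
    Subsingleton (IsFreeGroup.Generators H) := by
  classical
  by_contra hns
  obtain ⟨a, b, hab⟩ := (not_subsingleton_iff_nontrivial.mp hns).exists_pair_ne
  apply aux_of_not_commute hab
  let e := IsFreeGroup.toFreeGroup H
  have h1 : Commute (e.symm (FreeGroup.of a)) (e.symm (FreeGroup.of b)) := by
    have := hcomm _ (e.symm (FreeGroup.of a)).2 _ (e.symm (FreeGroup.of b)).2
    exact Subtype.ext this
  have := h1.map e.toMonoidHom
  simpa using this

/-- Elements of a subgroup with subsingleton generators are powers of a common element. -/
lemma aux_common_power {Y : Type} (H : Subgroup (FreeGroup Y))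
    (hss : Subsingleton (IsFreeGroup.Generators H)) :
    ∃ c : FreeGroup Y, ∀ x ∈ H, ∃ n : ℤ, x = c ^ n := by
  obtain ⟨g, hg, -⟩ := aux_powers (β := IsFreeGroup.Generators H)
  let e := IsFreeGroup.toFreeGroup H
  refine ⟨(e.symm g : H), fun x hx => ?_⟩
  obtain ⟨n, hn⟩ := hg (e ⟨x, hx⟩)
  refine ⟨n, ?_⟩
  have : (⟨x, hx⟩ : H) = e.symm g ^ n := by
    apply e.injective
    rw [map_zpow, hn, MulEquiv.apply_symm_apply]
  have := congrArg (Subtype.val) this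
  simpa using this

/-- torsion-freeness of free groups -/
lemma aux_tf {Y : Type} (x : FreeGroup Y) (hx : x ≠ 1) (t : ℤ) (ht : t ≠ 0) :
    x ^ t ≠ 1 := by
  intro hxt
  set H := Subgroup.zpowers x with hH
  have hcomm : ∀ a ∈ H, ∀ b ∈ H, a * b = b * a := by
    intro a ha b hb
    obtain ⟨i, rfl⟩ := Subgroup.mem_zpowers_iff.mp ha
    obtain ⟨j, rfl⟩ := Subgroup.mem_zpowers_iff.mp hb
    exact (Commute.zpow_zpow (Commute.refl x) i j).eq
  haveI hss := aux_subsingleton_gens H hcomm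
  obtain ⟨-, -, htf⟩ := aux_powers (β := IsFreeGroup.Generators H)
  let e := IsFreeGroup.toFreeGroup H
  have hxH : x ∈ H := Subgroup.mem_zpowers x
  have h1 : (⟨x, hxH⟩ : H) ^ t = 1 := by
    apply Subtype.ext
    simpa using hxt
  have h2 : e ⟨x, hxH⟩ ^ t = 1 := by rw [← map_zpow, h1, map_one]
  have h3 := htf _ t ht h2
  have : (⟨x, hxH⟩ : H) = 1 := e.injective (by rw [h3, map_one])
  exact hx (by simpa using congrArg Subtype.val this)

/-- If u w^k u⁻¹ = w^n with k ≠ n, the subgroup generated by u and w has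
subsingleton free generators. -/
lemma aux_conj {Y : Type} (u w : FreeGroup Y) (k n : ℤ) (hkn : k ≠ n)
    (heq : u * w ^ k * u⁻¹ = w ^ n) :
    Subsingleton (IsFreeGroup.Generators
      (Subgroup.closure {u, w} : Subgroup (FreeGroup Y))) := by
  classical
  set H := (Subgroup.closure {u, w} : Subgroup (FreeGroup Y)) with hHdef
  have huH : u ∈ H := Subgroup.subset_closure (by simp)
  have hwH : w ∈ H := Subgroup.subset_closure (by simp)
  set β := IsFreeGroup.Generators H with hβ
  let e := IsFreeGroup.toFreeGroup H
  set U := e ⟨u, huH⟩ with hU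
  set W := e ⟨w, hwH⟩ with hW
  -- closure of the two generators inside H is everything
  have hclosH : Subgroup.closure {(⟨u, huH⟩ : H), ⟨w, hwH⟩} = (⊤ : Subgroup H) := by
    apply Subgroup.map_injective (Subgroup.subtype_injective H)
    rw [MonoidHom.map_closure, Set.image_pair]
    simp only [Subgroup.coe_subtype]
    rw [← MonoidHom.range_eq_map, Subgroup.range_subtype]
  have hclos : Subgroup.closure {U, W} = (⊤ : Subgroup (FreeGroup β)) := by
    have h := MonoidHom.map_closure e.toMonoidHom {(⟨u, huH⟩ : H), ⟨w, hwH⟩}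
    rw [hclosH, Set.image_pair, Subgroup.map_top_of_surjective _ e.surjective] at h
    rw [hU, hW]
    simpa using h.symm
  -- the relation transported to FreeGroup β
  have hrel : U * W ^ k * U⁻¹ = W ^ n := by
    rw [hU, hW, ← map_zpow, ← map_zpow, ← map_inv, ← map_mul, ← map_mul]
    congr 1
    apply Subtype.ext
    push_cast
    exact heq
  -- abelianization map
  let φ : FreeGroup β →* Multiplicative (β →₀ ℤ) :=
    FreeGroup.lift (fun b => Multiplicative.ofAdd (Finsupp.single b (1 : ℤ)))
  have hφW : φ W = 1 := by
    have h2 := congrArg φ hrel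
    rw [map_mul, map_mul, map_inv, map_zpow, map_zpow] at h2
    have h3 : φ W ^ k = φ W ^ n := by
      rw [← h2, mul_comm (φ U) (φ W ^ k), mul_inv_cancel_right]
    have h4 : φ W ^ (k - n) = 1 := by
      rw [zpow_sub, h3, mul_inv_cancel]
    have h5 : (k - n) • (Multiplicative.toAdd (φ W)) = 0 := by
      rw [← toAdd_zpow, h4, toAdd_one]
    have h6 : Multiplicative.toAdd (φ W) = 0 := by
      rcases smul_eq_zero.mp h5 with h | h
      · exact absurd (sub_eq_zero.mp h) hkn
      · exact h
    calc φ W = Multiplicative.ofAdd (Multiplicative.toAdd (φ W)) := rfl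
    _ = Multiplicative.ofAdd 0 := by rw [h6]
    _ = 1 := rfl
  -- every basis vector is a multiple of toAdd (φ U)
  have hkey : ∀ a : β, ∃ z : ℤ, z • (Multiplicative.toAdd (φ U)) = Finsupp.single a (1 : ℤ) := by
    intro a
    have h1 : φ (FreeGroup.of a) ∈ Subgroup.map φ (Subgroup.closure {U, W}) := by
      rw [hclos]
      exact ⟨FreeGroup.of a, trivial, rfl⟩
    rw [MonoidHom.map_closure, Set.image_pair] at h1
    have h2 : Subgroup.closure {φ U, φ W} ≤ Subgroup.zpowers (φ U) := by
      apply Subgroup.closure_le _ |>.mpr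
      intro x hx
      rcases hx with rfl | rfl
      · exact Subgroup.mem_zpowers _
      · rw [hφW]; exact Subgroup.one_mem _
    obtain ⟨z, hz⟩ := Subgroup.mem_zpowers_iff.mp (h2 h1)
    refine ⟨z, ?_⟩
    have := congrArg Multiplicative.toAdd hz
    rw [toAdd_zpow] at this
    rw [this]
    simp [φ, FreeGroup.lift_apply_of]
  -- conclude β is a subsingleton
  rcases subsingleton_or_nontrivial β with h | h
  · exact h
  · exfalso
    obtain ⟨a, b, hab⟩ := h.exists_pair_ne
    obtain ⟨z₁, hz₁⟩ := hkey a
    obtain ⟨z₂, hz₂⟩ := hkey b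
    set f := Multiplicative.toAdd (φ U)
    have e₁ : z₁ * f a = 1 := by
      have := congrArg (fun g => g a) hz₁
      simpa [Finsupp.smul_apply] using this
    have e₂ : z₂ * f a = 0 := by
      have := congrArg (fun g => g a) hz₂
      simpa [Finsupp.smul_apply, Finsupp.single_apply, Ne.symm hab] using this
    have hfa : f a ≠ 0 := by
      intro h0
      rw [h0, mul_zero] at e₁
      exact one_ne_zero e₁.symm
    have hz₂0 : z₂ = 0 := by
      rcases mul_eq_zero.mp e₂ with h0 | h0
      · exact h0
      · exact absurd h0 hfa
    have : (Finsupp.single b (1:ℤ)) b = 0 := by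
      rw [← hz₂, hz₂0, zero_smul, Finsupp.coe_zero, Pi.zero_apply]
    simp at this

/-- The closure of two commuting elements is commutative. -/
lemma aux_comm_closure {G : Type*} [Group G] {x y : G} (h : Commute x y) :
    ∀ a ∈ Subgroup.closure {x, y}, ∀ b ∈ Subgroup.closure {x, y}, a * b = b * a := by
  have step : ∀ a ∈ Subgroup.closure {x, y}, Commute x a ∧ Commute y a := by
    intro a ha
    induction ha using Subgroup.closure_induction with
    | mem z hz =>
        rcases hz with rfl | rfl
        · exact ⟨Commute.refl z, h.symm⟩
        · exact ⟨h, Commute.refl z⟩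
    | one => exact ⟨Commute.one_right x, Commute.one_right y⟩
    | mul z₁ z₂ h₁ h₂ ih₁ ih₂ =>
        exact ⟨ih₁.1.mul_right ih₂.1, ih₁.2.mul_right ih₂.2⟩
    | inv z hz ih => exact ⟨ih.1.inv_right, ih.2.inv_right⟩
  intro a ha b hb
  have step2 : Commute b a := by
    induction hb using Subgroup.closure_induction with
    | mem z hz =>
        rcases hz with rfl | rfl
        · exact (step a ha).1
        · exact (step a ha).2
    | one => exact Commute.one_left a
    | mul z₁ z₂ h₁ h₂ ih₁ ih₂ => exact ih₁.mul_left ih₂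
    | inv z hz ih => exact ih.inv_left
  exact step2.symm.eq

/-- If v, w are nontrivial elements of a free group of rank > 1 with
⟨v⟩ ∩ ⟨w⟩ trivial, then v^m w^k v^{-m} ≠ w^n for all nonzero m, k, n. -/
theorem stmt2 (Y : Type) [Nontrivial Y] (v w : FreeGroup Y) (hv : v ≠ 1) (hw : w ≠ 1)
    (hdisj : Subgroup.zpowers v ⊓ Subgroup.zpowers w = ⊥) :
    ∀ m k n : ℤ, m ≠ 0 → k ≠ 0 → n ≠ 0 → v ^ m * w ^ k * v ^ (-m) ≠ w ^ n := by
  intro m k n hm hk hn heq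
  rw [zpow_neg] at heq
  have hum : v ^ m ≠ 1 := aux_tf v hv m hm
  have hwk : w ^ k ≠ 1 := aux_tf w hw k hk
  -- key step: v^m and w^k cannot be powers of a common element
  have key : ∀ c : FreeGroup Y, (∃ a : ℤ, v ^ m = c ^ a) → (∃ b : ℤ, w ^ k = c ^ b) → False := by
    rintro c ⟨a, ha⟩ ⟨b, hb⟩
    have ha0 : a ≠ 0 := by rintro rfl; exact hum (by rw [ha, zpow_zero])
    have hb0 : b ≠ 0 := by rintro rfl; exact hwk (by rw [hb, zpow_zero])
    have hab : (v ^ m) ^ b = (w ^ k) ^ a := by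
      rw [ha, hb, ← zpow_mul, ← zpow_mul, mul_comm]
    have hmem : (w ^ k) ^ a ∈ Subgroup.zpowers v ⊓ Subgroup.zpowers w := by
      constructor
      · rw [← hab, ← zpow_mul]; exact Subgroup.zpow_mem _ (Subgroup.mem_zpowers v) _
      · rw [← zpow_mul]; exact Subgroup.zpow_mem _ (Subgroup.mem_zpowers w) _
    rw [hdisj, Subgroup.mem_bot, ← zpow_mul] at hmem
    exact aux_tf w hw (k * a) (mul_ne_zero hk ha0) hmem
  by_cases hkn : k = n
  · subst hkn
    have hc : Commute (v ^ m) (w ^ k) := mul_inv_eq_iff_eq_mul.mp heq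
    have hss := aux_subsingleton_gens (Subgroup.closure {v ^ m, w ^ k})
      (aux_comm_closure hc)
    obtain ⟨c, hc'⟩ := aux_common_power _ hss
    exact key c
      (hc' _ (Subgroup.subset_closure (by simp)))
      (hc' _ (Subgroup.subset_closure (by simp)))
  · have hss := aux_conj (v ^ m) w k n hkn heq
    obtain ⟨c, hc'⟩ := aux_common_power _ hss
    obtain ⟨a, ha⟩ := hc' (v ^ m) (Subgroup.subset_closure (by simp))
    obtain ⟨b, hb⟩ := hc' w (Subgroup.subset_closure (by simp))
    exact key c ⟨a, ha⟩ ⟨b * k, by rw [hb, ← zpow_mul]⟩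
end
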